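/- Let d ≥ 1 be an integer and a > 0. Applying the turning bands operator twice, first from dimension d+4 to d+2 and then to d, to C(h)=exp(-h/a), yields exp(-h/a)·(1 - h(2d+3)/(a d (d+2)) + h²/(a² d (d+2))) for h > 0. -/

import Mathlib

noncomputable def turningBands (m : ℕ) (f : ℝ → ℝ) : ℝ → ℝ :=
  fun h => (m : ℝ)⁻¹ * h ^ ((1 : ℝ) - m) * deriv (fun t : ℝ => t ^ (m : ℝ) * f t) h

lemma expAux_hasDerivAt (a t : ℝ) :
    HasDerivAt (fun s : ℝ => Real.exp (-s / a)) (Real.exp (-t / a) * (-1 / a)) t := by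
  have h1 : HasDerivAt (fun s : ℝ => -s / a) (-1 / a) t := by
    simpa using ((hasDerivAt_id t).neg.div_const a)
  simpa using h1.exp

lemma deriv_inner (m : ℕ) (a t : ℝ) (ht : 0 < t) :
    deriv (fun s : ℝ => s ^ (m : ℝ) * Real.exp (-s / a)) t
      = t ^ ((m : ℝ) - 1) * Real.exp (-t / a) * ((m : ℝ) - t / a) := by
  have h1 : HasDerivAt (fun s : ℝ => s ^ (m : ℝ)) ((m : ℝ) * t ^ ((m : ℝ) - 1)) t :=
    Real.hasDerivAt_rpow_const (Or.inl ht.ne')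
  have h2 := expAux_hasDerivAt a t
  rw [(show HasDerivAt (fun s : ℝ => s ^ (m : ℝ) * Real.exp (-s / a)) _ t from h1.mul h2).deriv]
  have ht' : t ^ (m : ℝ) = t ^ ((m : ℝ) - 1) * t := by
    rw [← Real.rpow_add_one ht.ne']; norm_num
  rw [ht']; ring

lemma inner_eq (m : ℕ) (hm : 1 ≤ m) (a : ℝ) (ha : 0 < a) (t : ℝ) (ht : 0 < t) :
    turningBands m (fun s => Real.exp (-s / a)) t
      = Real.exp (-t / a) * (1 - t / (a * m)) := by
  unfold turningBands
  rw [deriv_inner m a t ht]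
  have e1 : t ^ ((1 : ℝ) - m) * t ^ ((m : ℝ) - 1) = 1 := by
    rw [← Real.rpow_add ht]; norm_num
  have hm0 : (m : ℝ) ≠ 0 := by positivity
  have ha0 : a ≠ 0 := ha.ne'
  field_simp
  linear_combination ((m : ℝ) * a - t) * e1

theorem turningBands_twice_exp (d : ℕ) (hd : 1 ≤ d) (a : ℝ) (ha : 0 < a)
    (h : ℝ) (hh : 0 < h) :
    turningBands d (turningBands (d + 2) (fun t => Real.exp (-t / a))) h
      = Real.exp (-h / a)
          * (1 - h * (2 * d + 3) / (a * d * (d + 2)) + h ^ 2 / (a ^ 2 * d * (d + 2))) := by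
  have hd0 : (d : ℝ) ≠ 0 := by positivity
  have hd2 : (d : ℝ) + 2 ≠ 0 := by positivity
  have ha0 : a ≠ 0 := ha.ne'
  have hev : (fun t : ℝ => t ^ (d : ℝ) * turningBands (d + 2) (fun s => Real.exp (-s / a)) t)
      =ᶠ[nhds h] fun t : ℝ => t ^ (d : ℝ) * (Real.exp (-t / a) * (1 - t / (a * ((d : ℝ) + 2)))) := by
    filter_upwards [Ioi_mem_nhds hh] with t ht
    rw [inner_eq (d + 2) (by omega) a ha t ht]
    push_cast
    ring_nf
  show (d : ℝ)⁻¹ * h ^ ((1 : ℝ) - d) *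
      deriv (fun t : ℝ => t ^ (d : ℝ) * turningBands (d + 2) (fun s => Real.exp (-s / a)) t) h = _
  rw [hev.deriv_eq]
  have h1 : HasDerivAt (fun s : ℝ => s ^ (d : ℝ)) ((d : ℝ) * h ^ ((d : ℝ) - 1)) h :=
    Real.hasDerivAt_rpow_const (Or.inl hh.ne')
  have h2 := expAux_hasDerivAt a h
  have h3 : HasDerivAt (fun s : ℝ => 1 - s / (a * ((d : ℝ) + 2))) (-(1 / (a * ((d : ℝ) + 2)))) h := by
    simpa using ((hasDerivAt_id h).div_const (a * ((d : ℝ) + 2))).const_sub 1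
  rw [(show HasDerivAt (fun t : ℝ => t ^ (d : ℝ) * (Real.exp (-t / a) * (1 - t / (a * ((d : ℝ) + 2))))) _ h from h1.mul (h2.mul h3)).deriv]
  have e1 : h ^ ((1 : ℝ) - d) * h ^ ((d : ℝ) - 1) = 1 := by
    rw [← Real.rpow_add hh]; norm_num
  have e2 : h ^ ((1 : ℝ) - d) * h ^ (d : ℝ) = h := by
    rw [← Real.rpow_add hh]; norm_num
  set E := Real.exp (-h / a)
  set P := h ^ ((1 : ℝ) - d)
  set Q := h ^ ((d : ℝ) - 1)
  set R := h ^ (d : ℝ)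
  field_simp
  linear_combination
    (E * (d : ℝ) * a * (a * ((d : ℝ) + 2) - h)) * e1
      + (E * (-(a * ((d : ℝ) + 2) - h) - a)) * e2
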